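/- Let n >= 3 be an integer and let alpha, beta be real numbers with alpha + n*beta = 1, 3 + 8*n*beta != 0 and 128*alpha^2 + 200*alpha - 67 != 0; set tau = 8*beta/(3 + 8*n*beta) and omega_3 = -48*beta/(128*alpha^2 + 200*alpha - 67). Let S be the (6n+1) x (3n+1) real matrix and L the (3n+1) x (6n+1) real matrix with the bordered block-circulant structure described in the context, and let A = L*S. Then there exists a row vector omega in R^{3n+1} whose entry at index 0 equals 1 - 25*n*omega_3, whose three entries on each sector are (at the same within-sector positions for every sector) the values 32*omega_3, omega_3 and -8*omega_3, and which satisfies omega * A = e_0 (the first standard basis row vector of R^{3n+1}). -/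

import Mathlib

set_option maxHeartbeats 1000000


open Matrix

noncomputable section

/-- Central block of the Loop local subdivision matrix. -/
def loopS0 : Matrix (Fin 6) (Fin 3) ℝ :=
  (1/16 : ℝ) • !![6,0,0; 10,1,1; 6,6,2; 6,0,2; 6,2,6; 2,0,6]

/-- Block of the Loop local subdivision matrix for sector `k + 1`. -/
def loopS1 : Matrix (Fin 6) (Fin 3) ℝ :=
  (1/16 : ℝ) • !![2,0,0; 1,0,0; 0,0,0; 6,0,0; 2,0,0; 6,2,0]

/-- Block of the Loop local subdivision matrix for sector `k - 1`. -/
def loopS2 : Matrix (Fin 6) (Fin 3) ℝ :=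
  (1/16 : ℝ) • !![2,0,0; 1,0,1; 0,0,2; 0,0,0; 0,0,0; 0,0,0]

/-- Column-0 entries of the sector rows of the Loop local subdivision matrix. -/
def loopSCol0 : Fin 6 → ℝ := (1/16 : ℝ) • ![6,1,0,2,0,0]

/-- Central block of the Loop position (limit-mask) matrix. -/
def loopL0 : Matrix (Fin 3) (Fin 6) ℝ :=
  ((1/12 : ℝ) • (!![6,1,1; 1,6,1; 0,1,0; 1,1,6; 0,1,1; 0,0,1] :
    Matrix (Fin 6) (Fin 3) ℝ))ᵀ

/-- Block of the Loop position matrix for sector `k + 1`. -/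
def loopL1 : Matrix (Fin 3) (Fin 6) ℝ :=
  ((1/12 : ℝ) • (!![1,0,1; 0,0,1; 0,0,0; 0,0,0; 0,0,0; 0,0,0] :
    Matrix (Fin 6) (Fin 3) ℝ))ᵀ

/-- Block of the Loop position matrix for sector `k - 1`. -/
def loopL2 : Matrix (Fin 3) (Fin 6) ℝ :=
  ((1/12 : ℝ) • (!![1,0,0; 0,0,0; 0,0,0; 1,1,0; 0,0,0; 0,1,0] :
    Matrix (Fin 6) (Fin 3) ℝ))ᵀ

/-- Column-0 entries of the sector rows of the Loop position matrix. -/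
def loopLCol0 : Fin 3 → ℝ := (1/12 : ℝ) • ![1,0,0]

/-- The `(6n+1) × (3n+1)` bordered block-circulant Loop local subdivision
matrix `S` at a vertex of valence `n`, with vertex-rule weights `α` and `β`.
Rows/columns are indexed by a center index (`Sum.inl ()`) followed by `n`
cyclic sectors of size `6` (rows) resp. `3` (columns). -/
def loopSMat (n : ℕ) [NeZero n] (α β : ℝ) :
    Matrix (Unit ⊕ ZMod n × Fin 6) (Unit ⊕ ZMod n × Fin 3) ℝ :=
  Matrix.of fun r c =>
    match r, c with
    | Sum.inl _, Sum.inl _ => α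
    | Sum.inl _, Sum.inr (_, j) => if j = 0 then β else 0
    | Sum.inr (_, i), Sum.inl _ => loopSCol0 i
    | Sum.inr (k, i), Sum.inr (m, j) =>
        if m = k then loopS0 i j
        else if m = k + 1 then loopS1 i j
        else if m = k - 1 then loopS2 i j
        else 0

/-- The `(3n+1) × (6n+1)` bordered block-circulant Loop position (limit-mask)
matrix `L` at a vertex of valence `n`, with limit-mask weight `τ`. -/
def loopLMat (n : ℕ) [NeZero n] (τ : ℝ) :
    Matrix (Unit ⊕ ZMod n × Fin 3) (Unit ⊕ ZMod n × Fin 6) ℝ :=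
  Matrix.of fun r c =>
    match r, c with
    | Sum.inl _, Sum.inl _ => 1 - n * τ
    | Sum.inl _, Sum.inr (_, j) => if j = 0 then τ else 0
    | Sum.inr (_, i), Sum.inl _ => loopLCol0 i
    | Sum.inr (k, i), Sum.inr (m, j) =>
        if m = k then loopL0 i j
        else if m = k + 1 then loopL1 i j
        else if m = k - 1 then loopL2 i j
        else 0

/-- The quasi-interpolation weight vector of the Loop subdivision at a vertex
of valence `n`: there is a row vector `ω` with center entry `1 - 25 n ω₃`,
whose three entries on each sector are (at the same within-sector positions for
every sector) the values `32 ω₃`, `ω₃` and `-8 ω₃`, satisfying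
`ω * A = e₀` with `A = L * S`. -/
lemma zmod_sum_ite {n : ℕ} [NeZero n] (hn : 3 ≤ n) (m : ZMod n) (X Y Z : ℝ) :
    (∑ k : ZMod n, if m = k then X else if m = k + 1 then Y
        else if m = k - 1 then Z else 0) = X + Y + Z := by
  have h1 : (1 : ZMod n) ≠ 0 := by
    intro h
    have h' : ((1 : ℕ) : ZMod n) = 0 := by exact_mod_cast h
    have hd := (ZMod.natCast_eq_zero_iff 1 n).mp h'
    have := Nat.le_of_dvd one_pos hd
    omega
  have h2 : (2 : ZMod n) ≠ 0 := by
    intro h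
    have h' : ((2 : ℕ) : ZMod n) = 0 := by exact_mod_cast h
    have hd := (ZMod.natCast_eq_zero_iff 2 n).mp h'
    have := Nat.le_of_dvd two_pos hd
    omega
  have d1 : m ≠ m - 1 := fun h => h1 (by linear_combination h)
  have d2 : m ≠ m + 1 := fun h => h1 (by linear_combination -h)
  have d3 : (m - 1) ≠ m + 1 := fun h => h2 (by linear_combination -h)
  have key : ∀ k : ZMod n,
      (if m = k then X else if m = k + 1 then Y else if m = k - 1 then Z else 0)
        = (if k = m then X else 0) + (if k = m - 1 then Y else 0)
          + (if k = m + 1 then Z else 0) := by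
    intro k
    have f1 : m = k + 1 ↔ k = m - 1 := by constructor <;> (intro h; rw [h]; ring)
    have f2 : m = k - 1 ↔ k = m + 1 := by constructor <;> (intro h; rw [h]; ring)
    simp only [f1, f2, show (m = k) ↔ (k = m) from eq_comm]
    by_cases hk1 : k = m
    · subst hk1; simp [d1, d2]
    · by_cases hk2 : k = m - 1
      · subst hk2; simp [hk1, d3, Ne.symm d1]
      · by_cases hk3 : k = m + 1
        · subst hk3; simp [hk1, hk2, Ne.symm d2, Ne.symm d3]
        · simp [hk1, hk2, hk3]
  simp only [key]
  rw [Finset.sum_add_distrib, Finset.sum_add_distrib]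
  simp [Finset.sum_ite_eq']

section VecApp
variable {A0 A1 A2 A3 A4 A5 : ℝ}
lemma vec3_app0 : ![A0, A1, A2] (0 : Fin 3) = A0 := rfl
lemma vec3_app1 : ![A0, A1, A2] (1 : Fin 3) = A1 := rfl
lemma vec3_app2 : ![A0, A1, A2] (2 : Fin 3) = A2 := rfl
lemma vec6_app0 : ![A0, A1, A2, A3, A4, A5] (0 : Fin 6) = A0 := rfl
lemma vec6_app1 : ![A0, A1, A2, A3, A4, A5] (1 : Fin 6) = A1 := rfl
lemma vec6_app2 : ![A0, A1, A2, A3, A4, A5] (2 : Fin 6) = A2 := rfl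
lemma vec6_app3 : ![A0, A1, A2, A3, A4, A5] (3 : Fin 6) = A3 := rfl
lemma vec6_app4 : ![A0, A1, A2, A3, A4, A5] (4 : Fin 6) = A4 := rfl
lemma vec6_app5 : ![A0, A1, A2, A3, A4, A5] (5 : Fin 6) = A5 := rfl
lemma cv2_1 {α : Type*} (x : α) (u : Fin 1 → α) : Matrix.vecCons x u (1 : Fin 2) = u (0 : Fin 1) := rfl
lemma cv3_1 {α : Type*} (x : α) (u : Fin 2 → α) : Matrix.vecCons x u (1 : Fin 3) = u (0 : Fin 2) := rfl
lemma cv3_2 {α : Type*} (x : α) (u : Fin 2 → α) : Matrix.vecCons x u (2 : Fin 3) = u (1 : Fin 2) := rfl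
lemma cv4_1 {α : Type*} (x : α) (u : Fin 3 → α) : Matrix.vecCons x u (1 : Fin 4) = u (0 : Fin 3) := rfl
lemma cv4_2 {α : Type*} (x : α) (u : Fin 3 → α) : Matrix.vecCons x u (2 : Fin 4) = u (1 : Fin 3) := rfl
lemma cv4_3 {α : Type*} (x : α) (u : Fin 3 → α) : Matrix.vecCons x u (3 : Fin 4) = u (2 : Fin 3) := rfl
lemma cv5_1 {α : Type*} (x : α) (u : Fin 4 → α) : Matrix.vecCons x u (1 : Fin 5) = u (0 : Fin 4) := rfl
lemma cv5_2 {α : Type*} (x : α) (u : Fin 4 → α) : Matrix.vecCons x u (2 : Fin 5) = u (1 : Fin 4) := rfl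
lemma cv5_3 {α : Type*} (x : α) (u : Fin 4 → α) : Matrix.vecCons x u (3 : Fin 5) = u (2 : Fin 4) := rfl
lemma cv5_4 {α : Type*} (x : α) (u : Fin 4 → α) : Matrix.vecCons x u (4 : Fin 5) = u (3 : Fin 4) := rfl
lemma cv6_1 {α : Type*} (x : α) (u : Fin 5 → α) : Matrix.vecCons x u (1 : Fin 6) = u (0 : Fin 5) := rfl
lemma cv6_2 {α : Type*} (x : α) (u : Fin 5 → α) : Matrix.vecCons x u (2 : Fin 6) = u (1 : Fin 5) := rfl
lemma cv6_3 {α : Type*} (x : α) (u : Fin 5 → α) : Matrix.vecCons x u (3 : Fin 6) = u (2 : Fin 5) := rfl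
lemma cv6_4 {α : Type*} (x : α) (u : Fin 5 → α) : Matrix.vecCons x u (4 : Fin 6) = u (3 : Fin 5) := rfl
lemma cv6_5 {α : Type*} (x : α) (u : Fin 5 → α) : Matrix.vecCons x u (5 : Fin 6) = u (4 : Fin 5) := rfl
lemma cv_zero {n : ℕ} {α : Type*} (x : α) (u : Fin n → α) : Matrix.vecCons x u (0 : Fin (n+1)) = x := rfl
lemma finmk3_0 (h : 0 < 3) : (⟨0, h⟩ : Fin 3) = (0 : Fin 3) := rfl
lemma finmk3_1 (h : 1 < 3) : (⟨1, h⟩ : Fin 3) = (1 : Fin 3) := rfl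
lemma finmk3_2 (h : 2 < 3) : (⟨2, h⟩ : Fin 3) = (2 : Fin 3) := rfl
lemma finmk6_0 (h : 0 < 6) : (⟨0, h⟩ : Fin 6) = (0 : Fin 6) := rfl
lemma finmk6_1 (h : 1 < 6) : (⟨1, h⟩ : Fin 6) = (1 : Fin 6) := rfl
lemma finmk6_2 (h : 2 < 6) : (⟨2, h⟩ : Fin 6) = (2 : Fin 6) := rfl
lemma finmk6_3 (h : 3 < 6) : (⟨3, h⟩ : Fin 6) = (3 : Fin 6) := rfl
lemma finmk6_4 (h : 4 < 6) : (⟨4, h⟩ : Fin 6) = (4 : Fin 6) := rfl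
lemma finmk6_5 (h : 5 < 6) : (⟨5, h⟩ : Fin 6) = (5 : Fin 6) := rfl
lemma finne3_1 : ((1 : Fin 3) = 0) = False := by decide
lemma finne3_2 : ((2 : Fin 3) = 0) = False := by decide
lemma fineq3_0 : ((0 : Fin 3) = 0) = True := by decide
lemma finne6_1 : ((1 : Fin 6) = 0) = False := by decide
lemma finne6_2 : ((2 : Fin 6) = 0) = False := by decide
lemma finne6_3 : ((3 : Fin 6) = 0) = False := by decide
lemma finne6_4 : ((4 : Fin 6) = 0) = False := by decide
lemma finne6_5 : ((5 : Fin 6) = 0) = False := by decide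
lemma fineq6_0 : ((0 : Fin 6) = 0) = True := by decide
end VecApp


lemma stage1 {n : ℕ} [NeZero n] (hn : 3 ≤ n) (τ a w0 w1 w2 : ℝ) :
    (Sum.elim (fun _ : Unit => a) (fun p : ZMod n × Fin 3 => ![w0, w1, w2] p.2))
        ᵥ* loopLMat n τ
      = Sum.elim (fun _ : Unit => a * (1 - n * τ) + n * (w0 / 12))
        (fun p : ZMod n × Fin 6 =>
          ![a * τ + (8 * w0 + w1 + 2 * w2) / 12, (w0 + 6 * w1 + 2 * w2) / 12,
            w1 / 12, (2 * w0 + 2 * w1 + 6 * w2) / 12, (w1 + w2) / 12,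
            (w1 + w2) / 12] p.2) := by
  funext c
  cases c with
  | inl u =>
    simp only [Matrix.vecMul, dotProduct, Fintype.sum_sum_type,
      Fintype.sum_prod_type, Finset.univ_unique, Finset.sum_singleton,
      loopLMat, Matrix.of_apply, Sum.elim_inl, Sum.elim_inr]
    simp only [Fin.sum_univ_three, loopLCol0, vec3_app0, vec3_app1, vec3_app2,
      Pi.smul_apply, smul_eq_mul, Fin.isValue]
    rw [Finset.sum_const]
    simp only [Finset.card_univ, ZMod.card, nsmul_eq_mul]
    ring
  | inr p =>
    obtain ⟨m, j⟩ := p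
    simp only [Matrix.vecMul, dotProduct, Fintype.sum_sum_type,
      Fintype.sum_prod_type, Finset.univ_unique, Finset.sum_singleton,
      loopLMat, Matrix.of_apply, Sum.elim_inl, Sum.elim_inr]
    rw [Finset.sum_comm]
    simp only [Fin.sum_univ_three, mul_ite, mul_zero]
    rw [zmod_sum_ite hn, zmod_sum_ite hn, zmod_sum_ite hn]
    fin_cases j <;>
      simp only [loopL0, loopL1, loopL2, vec3_app0, vec3_app1, vec3_app2,
        vec6_app0, vec6_app1, vec6_app2, vec6_app3, vec6_app4, vec6_app5,
        finmk3_0, finmk3_1, finmk3_2, finmk6_0, finmk6_1, finmk6_2, finmk6_3, finmk6_4, finmk6_5, cv2_1, cv3_1, cv3_2, cv4_1, cv4_2, cv4_3, cv5_1, cv5_2, cv5_3, cv5_4, cv6_1, cv6_2, cv6_3, cv6_4, cv6_5, cv_zero, Matrix.vecHead, Matrix.vecTail,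
        Matrix.of_apply, Matrix.transpose_apply, Matrix.smul_apply, smul_eq_mul, Fin.isValue] <;>
      norm_num [finne3_1, finne3_2, finne6_1, finne6_2, finne6_3, finne6_4, finne6_5, fineq3_0, fineq6_0] <;> ring

lemma stage2 {n : ℕ} [NeZero n] (hn : 3 ≤ n) (α β c v0 v1 v2 v3 v4 v5 : ℝ)
    (hc : c * α + n * ((6 * v0 + v1 + 2 * v3) / 16) = 1)
    (hs0 : c * β + (10 * v0 + 12 * v1 + 6 * v2 + 12 * v3 + 8 * v4 + 8 * v5) / 16 = 0)
    (hs1 : (v1 + 6 * v2 + 2 * v4 + 2 * v5) / 16 = 0)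
    (hs2 : (2 * v1 + 4 * v2 + 2 * v3 + 6 * v4 + 6 * v5) / 16 = 0) :
    (Sum.elim (fun _ : Unit => c) (fun p : ZMod n × Fin 6 => ![v0, v1, v2, v3, v4, v5] p.2))
        ᵥ* loopSMat n α β = Pi.single (Sum.inl ()) 1 := by
  funext d
  cases d with
  | inl u =>
    simp only [Matrix.vecMul, dotProduct, Fintype.sum_sum_type,
      Fintype.sum_prod_type, Finset.univ_unique, Finset.sum_singleton,
      loopSMat, Matrix.of_apply, Sum.elim_inl, Sum.elim_inr]
    simp only [Fin.sum_univ_six, loopSCol0, vec6_app0, vec6_app1, vec6_app2,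
      vec6_app3, vec6_app4, vec6_app5, Pi.smul_apply, smul_eq_mul, Fin.isValue]
    rw [Finset.sum_const]
    simp only [Finset.card_univ, ZMod.card, nsmul_eq_mul]
    rw [Pi.single_eq_same]
    linear_combination hc
  | inr p =>
    obtain ⟨m, j⟩ := p
    simp only [Matrix.vecMul, dotProduct, Fintype.sum_sum_type,
      Fintype.sum_prod_type, Finset.univ_unique, Finset.sum_singleton,
      loopSMat, Matrix.of_apply, Sum.elim_inl, Sum.elim_inr]
    rw [Finset.sum_comm]
    simp only [Fin.sum_univ_six, mul_ite, mul_zero]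
    rw [zmod_sum_ite hn, zmod_sum_ite hn, zmod_sum_ite hn, zmod_sum_ite hn,
      zmod_sum_ite hn, zmod_sum_ite hn]
    rw [Pi.single_eq_of_ne (by simp)]
    fin_cases j <;>
      simp only [loopS0, loopS1, loopS2, vec3_app0, vec3_app1, vec3_app2,
        vec6_app0, vec6_app1, vec6_app2, vec6_app3, vec6_app4, vec6_app5,
        finmk3_0, finmk3_1, finmk3_2, finmk6_0, finmk6_1, finmk6_2, finmk6_3, finmk6_4, finmk6_5, cv2_1, cv3_1, cv3_2, cv4_1, cv4_2, cv4_3, cv5_1, cv5_2, cv5_3, cv5_4, cv6_1, cv6_2, cv6_3, cv6_4, cv6_5, cv_zero, Matrix.vecHead, Matrix.vecTail,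
        Matrix.of_apply, Matrix.transpose_apply, Matrix.smul_apply, smul_eq_mul, Fin.isValue] <;>
      norm_num [finne3_1, finne3_2, finne6_1, finne6_2, finne6_3, finne6_4, finne6_5, fineq3_0, fineq6_0]
    · linear_combination hs0
    · linear_combination hs1
    · linear_combination hs2

theorem loop_quasi_interpolation_weights
    (n : ℕ) [NeZero n] (hn : 3 ≤ n) (α β τ ω₃ : ℝ)
    (hαβ : α + n * β = 1)
    (h1 : 3 + 8 * n * β ≠ 0)
    (h2 : 128 * α^2 + 200 * α - 67 ≠ 0)
    (hτ : τ = 8 * β / (3 + 8 * n * β))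
    (hω₃ : ω₃ = -48 * β / (128 * α^2 + 200 * α - 67)) :
    ∃ ω : (Unit ⊕ ZMod n × Fin 3) → ℝ, ∃ w : Fin 3 → ℝ,
      ω (Sum.inl ()) = 1 - 25 * n * ω₃ ∧
      (∀ (k : ZMod n) (j : Fin 3), ω (Sum.inr (k, j)) = w j) ∧
      ({w 0, w 1, w 2} : Multiset ℝ) = {32 * ω₃, ω₃, -8 * ω₃} ∧
      ω ᵥ* (loopLMat n τ * loopSMat n α β) = Pi.single (Sum.inl ()) 1 := by
  have hα : α = 1 - n * β := by linarith
  subst hα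
  refine ⟨Sum.elim (fun _ => 1 - 25 * n * ω₃) (fun p => ![32 * ω₃, ω₃, -8 * ω₃] p.2),
    ![32 * ω₃, ω₃, -8 * ω₃], rfl, fun k j => rfl, by norm_num [vec3_app2], ?_⟩
  rw [← Matrix.vecMul_vecMul, stage1 hn]
  apply stage2 hn
  · rw [hτ, hω₃]; generalize hD : 128 * (1 - ↑n * β) ^ 2 + 200 * (1 - ↑n * β) - 67 = D at h2 ⊢; generalize hE : 3 + 8 * (↑n : ℝ) * β = E at h1 ⊢; field_simp; subst hD hE; ring
  · rw [hτ, hω₃]; generalize hD : 128 * (1 - ↑n * β) ^ 2 + 200 * (1 - ↑n * β) - 67 = D at h2 ⊢; generalize hE : 3 + 8 * (↑n : ℝ) * β = E at h1 ⊢; field_simp; subst hD hE; ring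
  · rw [hω₃]; field_simp; ring
  · rw [hω₃]; field_simp; ring

end
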